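/- Let 𝒳 be a type with exactly N elements, Z : 𝒳 → Fin N a bijection, and f(x) = e_{Z(x)} the one-hot encoding into ℝ^N. For any nonempty finite multiset X over 𝒳, multiplying the VPA readout embedding by √|X| recovers the count vector of the multiset: √|X| · h(X) = ∑_{x ∈ X} e_{Z(x)}, whose coordinate at index Z(x) equals the multiplicity of x in X; hence the multiset X can be uniquely reconstructed from h(X) = (1/√|X|) ∑_{x ∈ X} f(x). -/

import Mathlib

/-- **The multiset can be uniquely reconstructed from the VPA readout embedding.**
With the one-hot encoding `f x = e_{Z x}` into `ℝ^N`, multiplying the VPA readout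
`h(X) = (1/√|X|) ∑_{x ∈ X} f(x)` of a nonempty finite multiset `X` by `√|X|` recovers
the count vector `∑_{x ∈ X} e_{Z x}`, whose coordinate at `Z x` is the multiplicity of
`x` in `X`; hence `h` is injective on nonempty finite multisets. -/
theorem vpa_readout_reconstructs_multiset
    (N : ℕ) (𝒳 : Type*) [Fintype 𝒳] [DecidableEq 𝒳] (hcard : Fintype.card 𝒳 = N)
    (Z : 𝒳 ≃ Fin N) (f : 𝒳 → (Fin N → ℝ))
    (hf : ∀ x, f x = Pi.single (Z x) (1 : ℝ))
    (h : Multiset 𝒳 → (Fin N → ℝ))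
    (hdef : ∀ X : Multiset 𝒳, h X = (Real.sqrt X.card)⁻¹ • (X.map f).sum) :
    (∀ X : Multiset 𝒳, X ≠ 0 → Real.sqrt X.card • h X = (X.map f).sum) ∧
    (∀ X : Multiset 𝒳, X ≠ 0 → ∀ x : 𝒳,
        (Real.sqrt X.card • h X) (Z x) = X.count x) ∧
    (∀ X Y : Multiset 𝒳, X ≠ 0 → Y ≠ 0 → h X = h Y → X = Y) := by
  -- coordinate lemma
  have hcoord : ∀ (X : Multiset 𝒳) (x : 𝒳), (X.map f).sum (Z x) = X.count x := by
    intro X x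
    induction X using Multiset.induction with
    | empty => simp
    | cons a X ih =>
      rw [Multiset.map_cons, Multiset.sum_cons, Pi.add_apply, hf a, ih,
        Pi.single_apply, Multiset.count_cons]
      by_cases hax : x = a
      · simp [hax, add_comm]
      · have : ¬ (Z a = Z x) := fun hz => hax (Z.injective hz).symm
        simp [this, hax]
  -- total sum lemma
  have htot : ∀ (X : Multiset 𝒳), ∑ i, (X.map f).sum i = (X.card : ℝ) := by
    intro X
    induction X using Multiset.induction with
    | empty => simp
    | cons a X ih =>
      rw [Multiset.map_cons, Multiset.sum_cons]
      simp [Finset.sum_add_distrib, ih, hf a, add_comm]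
  have hsqrt : ∀ X : Multiset 𝒳, X ≠ 0 → Real.sqrt X.card ≠ 0 := by
    intro X hX
    have : 0 < X.card := Multiset.card_pos.mpr hX
    positivity
  have key : ∀ X : Multiset 𝒳, X ≠ 0 → Real.sqrt X.card • h X = (X.map f).sum := by
    intro X hX
    rw [hdef, smul_smul, mul_inv_cancel₀ (hsqrt X hX), one_smul]
  refine ⟨key, ?_, ?_⟩
  · intro X hX x
    rw [key X hX, hcoord]
  · intro X Y hX hY hXY
    -- sum of coordinates of h X is √|X|
    have hsum : ∀ W : Multiset 𝒳, W ≠ 0 → ∑ i, h W i = Real.sqrt W.card := by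
      intro W hW
      simp only [hdef, Pi.smul_apply, smul_eq_mul, ← Finset.mul_sum, htot]
      rw [← Real.sqrt_mul_self (by positivity : (0:ℝ) ≤ (W.card : ℝ))]
      field_simp
      rw [Real.div_sqrt]
    have hcards : Real.sqrt X.card = Real.sqrt Y.card := by
      rw [← hsum X hX, ← hsum Y hY, hXY]
    have hcard' : (X.card : ℝ) = Y.card := by
      have := congrArg (fun t => t * t) hcards
      simpa [Real.mul_self_sqrt (by positivity : (0:ℝ) ≤ (X.card : ℝ)),
        Real.mul_self_sqrt (by positivity : (0:ℝ) ≤ (Y.card : ℝ))] using this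
    have hS : (X.map f).sum = (Y.map f).sum := by
      rw [← key X hX, ← key Y hY, hXY, hcards]
    ext x
    have := congrFun hS (Z x)
    rw [hcoord, hcoord] at this
    exact_mod_cast this
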